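/- (Injectivity of the raising map.) Fix integers m ≥ 1 and k ≥ 1. The restricted raising map R_k : End(P_{k−1}) → End(P_k), T ↦ Σ_{s=1}^m x_s ∘ T ∘ ∂_s, is injective: if Σ_s x_s ∘ T ∘ ∂_s = Σ_s x_s ∘ T' ∘ ∂_s as endomorphisms of P_k, then T = T'. -/

import Mathlib

open MvPolynomial

noncomputable section

/-- The `k`-photon sector `P_k`: homogeneous polynomials of degree `k` in `m` variables
(the Bargmann realization of the `m`-mode bosonic Fock space). -/
abbrev P (m k : ℕ) : Submodule ℂ (MvPolynomial (Fin m) ℂ) :=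
  homogeneousSubmodule (Fin m) ℂ k

lemma mulX_mem {m d : ℕ} (s : Fin m) {p : MvPolynomial (Fin m) ℂ} (hp : p ∈ P m d) :
    MvPolynomial.X s * p ∈ P m (d + 1) := by
  rw [mem_homogeneousSubmodule] at hp ⊢
  have := (isHomogeneous_X ℂ s).mul hp
  rwa [Nat.add_comm] at this

lemma degree_single_one {m : ℕ} (s : Fin m) : (Finsupp.single s 1).degree = 1 := by
  rw [Finsupp.degree_apply, Finsupp.support_single_ne_zero _ one_ne_zero, Finset.sum_singleton,
    Finsupp.single_eq_same]

lemma pderiv_mem {m d : ℕ} (s : Fin m) {p : MvPolynomial (Fin m) ℂ}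
    (hp : p ∈ P m (d + 1)) : MvPolynomial.pderiv s p ∈ P m d := by
  rw [mem_homogeneousSubmodule] at hp
  rw [as_sum p, map_sum]
  apply Submodule.sum_mem
  intro u hu
  rw [pderiv_monomial]
  by_cases h : u s = 0
  · simp [h]
  · rw [mem_homogeneousSubmodule]
    apply isHomogeneous_monomial
    have hle : Finsupp.single s 1 ≤ u :=
      Finsupp.single_le_iff.mpr (Nat.one_le_iff_ne_zero.mpr h)
    have hsum : (u - Finsupp.single s 1) + Finsupp.single s 1 = u :=
      tsub_add_cancel_of_le hle
    have hdeg : u.degree = d + 1 := by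
      have hc : coeff u p ≠ 0 := (mem_support_iff).mp hu
      have := hp hc
      rwa [Finsupp.degree_eq_weight_one]
    have hadd : (u - Finsupp.single s 1).degree + (Finsupp.single s 1).degree = u.degree := by
      simp_rw [Finsupp.degree_eq_weight_one]
      rw [← map_add, hsum]
    rw [degree_single_one] at hadd
    omega

/-- Multiplication by `x_s` as a linear map `P_d → P_{d+1}`. -/
def xRes (m d : ℕ) (s : Fin m) : P m d →ₗ[ℂ] P m (d + 1) :=
  (LinearMap.mulLeft ℂ (MvPolynomial.X s)).restrict fun _q hq => mulX_mem s hq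

/-- The partial derivative `∂_s` as a linear map `P_{d+1} → P_d`. -/
def dRes (m d : ℕ) (s : Fin m) : P m (d + 1) →ₗ[ℂ] P m d :=
  (MvPolynomial.pderiv s).toLinearMap.restrict fun _q hq => pderiv_mem s hq

/-- The restricted lowering map `L_{d+1} : End(P_{d+1}) → End(P_d)`,
`T ↦ Σ_s ∂_s ∘ T ∘ x_s`. -/
def Lres (m d : ℕ) :
    Module.End ℂ (P m (d + 1)) →ₗ[ℂ] Module.End ℂ (P m d) where
  toFun T := ∑ s, dRes m d s ∘ₗ T ∘ₗ xRes m d s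
  map_add' T T' := by
    rw [← Finset.sum_add_distrib]
    exact Finset.sum_congr rfl fun s _ => by
      rw [LinearMap.add_comp, LinearMap.comp_add]
  map_smul' c T := by
    simp [Finset.smul_sum, LinearMap.smul_comp, LinearMap.comp_smul]

/-- The restricted raising map `R_{d+1} : End(P_d) → End(P_{d+1})`,
`T ↦ Σ_s x_s ∘ T ∘ ∂_s`. -/
def Rres (m d : ℕ) :
    Module.End ℂ (P m d) →ₗ[ℂ] Module.End ℂ (P m (d + 1)) where
  toFun T := ∑ s, xRes m d s ∘ₗ T ∘ₗ dRes m d s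
  map_add' T T' := by
    rw [← Finset.sum_add_distrib]
    exact Finset.sum_congr rfl fun s _ => by
      rw [LinearMap.add_comp, LinearMap.comp_add]
  map_smul' c T := by
    simp [Finset.smul_sum, LinearMap.smul_comp, LinearMap.comp_smul]

end


/-- base-(j+2) weight -/
def phi (m j : ℕ) (u : Fin m →₀ ℕ) : ℕ := ∑ i : Fin m, u i * (j+2)^(m - 1 - (i:ℕ))

lemma phi_add (m j : ℕ) (a b : Fin m →₀ ℕ) : phi m j (a + b) = phi m j a + phi m j b := by
  unfold phi
  rw [← Finset.sum_add_distrib]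
  exact Finset.sum_congr rfl fun i _ => by rw [Finsupp.add_apply, add_mul]

lemma phi_single (m j : ℕ) (s : Fin m) (c : ℕ) :
    phi m j (Finsupp.single s c) = c * (j+2)^(m - 1 - (s:ℕ)) := by
  unfold phi
  rw [Finset.sum_eq_single s]
  · rw [Finsupp.single_eq_same]
  · intro i _ hi
    rw [Finsupp.single_eq_of_ne' (Ne.symm hi), zero_mul]
  · simp

lemma geom (j : ℕ) : ∀ n : ℕ, (j+1) * (∑ t ∈ Finset.range n, (j+2)^t) + 1 = (j+2)^n := by
  intro n
  induction n with
  | zero => simp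
  | succ n ih =>
    rw [Finset.sum_range_succ, Nat.mul_add, pow_succ]
    nlinarith [ih]

lemma phi_lt (m j : ℕ) (u : Fin m →₀ ℕ) (hu : ∀ i, u i ≤ j) : phi m j u < (j+2)^m := by
  have h1 : phi m j u ≤ ∑ i : Fin m, j * (j+2)^(m - 1 - (i:ℕ)) :=
    Finset.sum_le_sum fun i _ => Nat.mul_le_mul_right _ (hu i)
  have h2 : ∑ i : Fin m, j * (j+2)^(m - 1 - (i:ℕ)) = ∑ t ∈ Finset.range m, j * (j+2)^t := by
    rw [Fin.sum_univ_eq_sum_range (fun i => j * (j+2)^(m-1-i)) m]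
    exact Finset.sum_range_reflect (fun t => j * (j+2)^t) m
  have h3 : ∑ t ∈ Finset.range m, j * (j+2)^t ≤ (j+1) * ∑ t ∈ Finset.range m, (j+2)^t := by
    rw [Finset.mul_sum]
    exact Finset.sum_le_sum fun t _ => Nat.mul_le_mul_right _ (Nat.le_succ j)
  have h4 := geom j m
  omega

lemma degree_add' (m : ℕ) (a b : Fin m →₀ ℕ) : (a + b).degree = a.degree + b.degree := by
  simp_rw [Finsupp.degree_eq_weight_one]
  rw [map_add]

lemma key (m j : ℕ) (hm : 1 ≤ m) (E : Module.End ℂ (P m j)) (hE : Rres m j E = 0) :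
    ∀ n (u : Fin m →₀ ℕ), u.degree = j →
      ∀ hmem : MvPolynomial.monomial u (1:ℂ) ∈ P m j,
      (j+2)^m - phi m j u ≤ n → E ⟨MvPolynomial.monomial u 1, hmem⟩ = 0 := by
  intro n
  induction n with
  | zero =>
    intro u hu hmem hn
    have hb : phi m j u < (j+2)^m := phi_lt m j u (fun i => hu ▸ Finsupp.le_degree i u)
    omega
  | succ n ih =>
    intro u hu hmem hn
    set z : Fin m := ⟨0, hm⟩ with hz
    set v := u + Finsupp.single z 1 with hv
    have hvdeg : v.degree = j + 1 := by
      rw [hv, degree_add', hu, degree_single_one]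
    have hvmem : MvPolynomial.monomial v (1:ℂ) ∈ P m (j+1) := by
      rw [mem_homogeneousSubmodule]; exact isHomogeneous_monomial _ hvdeg
    have hub : ∀ i, u i ≤ j := fun i => hu ▸ Finsupp.le_degree i u
    have hphiu : phi m j u < (j+2)^m := phi_lt m j u hub
    -- the terms of the sum
    have hterm : ∀ s : Fin m, s ≠ z →
        E (dRes m j s ⟨MvPolynomial.monomial v 1, hvmem⟩) = 0 := by
      intro s hs
      have hvs : v s = u s := by
        rw [hv, Finsupp.add_apply, Finsupp.single_eq_of_ne' (Ne.symm hs), add_zero]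
      by_cases h0 : u s = 0
      · have : dRes m j s ⟨MvPolynomial.monomial v 1, hvmem⟩ = 0 := by
          apply Subtype.ext
          show (MvPolynomial.pderiv s) (MvPolynomial.monomial v 1) = 0
          rw [pderiv_monomial, hvs, h0]
          simp
        rw [this, map_zero]
      · -- u s ≥ 1
        have hsle : Finsupp.single s 1 ≤ v :=
          Finsupp.single_le_iff.mpr (by omega)
        set u' := v - Finsupp.single s 1 with hu'
        have hsum : u' + Finsupp.single s 1 = v := tsub_add_cancel_of_le hsle
        have hu'deg : u'.degree = j := by
          have := degree_add' m u' (Finsupp.single s 1)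
          rw [hsum, hvdeg, degree_single_one] at this
          omega
        have hu'mem : MvPolynomial.monomial u' (1:ℂ) ∈ P m j := by
          rw [mem_homogeneousSubmodule]; exact isHomogeneous_monomial _ hu'deg
        have hdres : dRes m j s ⟨MvPolynomial.monomial v 1, hvmem⟩
            = ((v s : ℂ)) • ⟨MvPolynomial.monomial u' 1, hu'mem⟩ := by
          apply Subtype.ext
          show (MvPolynomial.pderiv s) (MvPolynomial.monomial v 1)
            = (v s : ℂ) • MvPolynomial.monomial u' 1
          rw [pderiv_monomial, MvPolynomial.smul_monomial]
          norm_num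
          rw [hu']
        -- phi comparison
        have hphis : phi m j u' + (j+2)^(m - 1 - (s:ℕ)) = phi m j u + (j+2)^(m-1) := by
          have h1 : phi m j (u' + Finsupp.single s 1) = phi m j v := by rw [hsum]
          rw [phi_add, phi_add, phi_single, phi_single] at h1
          simpa [hz] using h1
        have hslt : (j+2)^(m - 1 - (s:ℕ)) < (j+2)^(m-1) := by
          apply Nat.pow_lt_pow_right (by omega)
          have hs1 : 1 ≤ (s:ℕ) := by
            rcases Nat.eq_zero_or_pos (s:ℕ) with h | h
            · exact absurd (Fin.ext h) hs
            · exact h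
          have := s.isLt
          omega
        have hu'b : ∀ i, u' i ≤ j := fun i => hu'deg ▸ Finsupp.le_degree i u'
        have hphiu' : phi m j u' < (j+2)^m := phi_lt m j u' hu'b
        have hmeas : (j+2)^m - phi m j u' ≤ n := by omega
        rw [hdres, map_smul, ih u' hu'deg hu'mem hmeas, smul_zero]
    -- the z term
    have hvz : v z = u z + 1 := by
      rw [hv, Finsupp.add_apply, Finsupp.single_eq_same]
    have hvu : v - Finsupp.single z 1 = u := by
      rw [hv]; ext i; by_cases hi : i = z
      · subst hi; simp
      · simp [Finsupp.single_eq_of_ne (Ne.symm hi)]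
    have hdz : dRes m j z ⟨MvPolynomial.monomial v 1, hvmem⟩
        = ((u z + 1 : ℕ) : ℂ) • ⟨MvPolynomial.monomial u 1, hmem⟩ := by
      apply Subtype.ext
      show (MvPolynomial.pderiv z) (MvPolynomial.monomial v 1)
        = ((u z + 1 : ℕ) : ℂ) • MvPolynomial.monomial u 1
      rw [pderiv_monomial, MvPolynomial.smul_monomial, hvu, hvz]
      norm_num
    -- apply hE
    have happ : (Rres m j E) ⟨MvPolynomial.monomial v 1, hvmem⟩ = 0 := by
      rw [hE]; rfl
    have hcoe : ((Rres m j E) ⟨MvPolynomial.monomial v 1, hvmem⟩ : MvPolynomial (Fin m) ℂ)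
        = ∑ s : Fin m, MvPolynomial.X s *
            ((E (dRes m j s ⟨MvPolynomial.monomial v 1, hvmem⟩) : P m j) : MvPolynomial (Fin m) ℂ) := by
      show ((((∑ s : Fin m, xRes m j s ∘ₗ E ∘ₗ dRes m j s)) ⟨MvPolynomial.monomial v 1, hvmem⟩ : P m (j+1)) : MvPolynomial (Fin m) ℂ) = _
      rw [LinearMap.sum_apply, Submodule.coe_sum]
      refine Finset.sum_congr rfl fun s _ => ?_
      rw [LinearMap.comp_apply, LinearMap.comp_apply]
      show ((xRes m j s) _ : MvPolynomial (Fin m) ℂ) = _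
      rfl
    rw [happ] at hcoe
    have hsum0 : (0 : MvPolynomial (Fin m) ℂ)
        = MvPolynomial.X z * (((u z + 1 : ℕ) : ℂ) •
            ((E ⟨MvPolynomial.monomial u 1, hmem⟩ : P m j) : MvPolynomial (Fin m) ℂ)) := by
      have := hcoe
      rw [Finset.sum_eq_single z] at this
      · rw [hdz, map_smul] at this
        simpa using this
      · intro s _ hs
        rw [hterm s hs]
        simp
      · simp
    have hx : (MvPolynomial.X z : MvPolynomial (Fin m) ℂ) ≠ 0 := MvPolynomial.X_ne_zero z
    have hc : ((u z + 1 : ℕ) : ℂ) ≠ 0 := by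
      exact_mod_cast Nat.succ_ne_zero (u z)
    have : ((E ⟨MvPolynomial.monomial u 1, hmem⟩ : P m j) : MvPolynomial (Fin m) ℂ) = 0 := by
      rcases mul_eq_zero.mp hsum0.symm with h | h
      · exact absurd h hx
      · rcases smul_eq_zero.mp h with h | h
        · exact absurd h hc
        · exact h
    exact Subtype.ext this

set_option synthInstance.maxHeartbeats 400000 in
/-- Injectivity of the raising map. For `m ≥ 1` and `k ≥ 1`
(here `k = j + 1`), the restricted raising map `R_k : End(P_{k−1}) → End(P_k)`,
`T ↦ Σ_s x_s ∘ T ∘ ∂_s`, is injective. -/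
theorem stmt14 (m j : ℕ) (hm : 1 ≤ m)
    (T T' : Module.End ℂ (P m j)) (h : Rres m j T = Rres m j T') :
    T = T' := by
  have hE : Rres m j (T - T') = 0 := by
    have h2 : Rres m j (T - T') = Rres m j T - Rres m j T' := map_sub (Rres m j) T T'
    rw [h2, h]; exact sub_self (Rres m j T')
  set E := T - T' with hEdef
  rw [← sub_eq_zero]
  apply LinearMap.ext
  intro q
  rw [LinearMap.zero_apply]
  -- decompose q into monomials
  have hq := q.2
  rw [mem_homogeneousSubmodule] at hq
  have hdeg : ∀ u ∈ (q : MvPolynomial (Fin m) ℂ).support, u.degree = j := by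
    intro u hu
    have := hq (MvPolynomial.mem_support_iff.mp hu)
    rwa [Finsupp.degree_eq_weight_one]
  have hmem : ∀ u ∈ (q : MvPolynomial (Fin m) ℂ).support,
      MvPolynomial.monomial u (1:ℂ) ∈ P m j := by
    intro u hu
    rw [mem_homogeneousSubmodule]
    exact isHomogeneous_monomial _ (hdeg u hu)
  have hqeq : q = ∑ u ∈ (q : MvPolynomial (Fin m) ℂ).support.attach,
      MvPolynomial.coeff u.1 (q : MvPolynomial (Fin m) ℂ) •
        (⟨MvPolynomial.monomial u.1 1, hmem u.1 u.2⟩ : P m j) := by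
    apply Subtype.ext
    rw [Submodule.coe_sum]
    simp only [SetLike.val_smul]
    show (q : MvPolynomial (Fin m) ℂ) = _
    rw [Finset.sum_attach ((q : MvPolynomial (Fin m) ℂ).support)
      (fun u => MvPolynomial.coeff u (q : MvPolynomial (Fin m) ℂ) • MvPolynomial.monomial u (1:ℂ))]
    conv_lhs => rw [(MvPolynomial.support_sum_monomial_coeff (q : MvPolynomial (Fin m) ℂ)).symm]
    refine Finset.sum_congr rfl fun u _ => ?_
    rw [MvPolynomial.smul_monomial, smul_eq_mul, mul_one]
  rw [hqeq, map_sum]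
  refine Finset.sum_eq_zero fun u _ => ?_
  rw [map_smul, key m j hm E hE ((j+2)^m) u.1 (hdeg u.1 u.2) (hmem u.1 u.2) (Nat.sub_le _ _),
    smul_zero]
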